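/- arXiv:2512.03930 — 9 statements merged into one kernel-verified Lean document; each statement's English description precedes it below -/
import Mathlib

section
/- Let G be a normal-form game and let G', G'' be two reductions of G with strategy-profile sets S' and S'' such that the player-by-player union satisfies (S'_1 ∪ S''_1) × ... × (S'_n ∪ S''_n) = S. Then any strategy profile that is a Nash equilibrium of both G' and G'' is a Nash equilibrium of G. (The Nash equilibrium correspondence satisfies Merging Consistency.) -/
universe u v

variable {ι : Type u} {σ : ι → Type v}

/-- A normal-form game: nonempty strategy sets and complete, transitive
preferences over strategy profiles. -/
structure Game (ι : Type u) (σ : ι → Type v) where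
  S : ∀ i, Set (σ i)
  nonempty : ∀ i, (S i).Nonempty
  pref : ι → (∀ i, σ i) → (∀ i, σ i) → Prop
  complete : ∀ i s t, (∀ j, s j ∈ S j) → (∀ j, t j ∈ S j) → pref i s t ∨ pref i t s
  trans : ∀ i s t u, (∀ j, s j ∈ S j) → (∀ j, t j ∈ S j) → (∀ j, u j ∈ S j) →
    pref i s t → pref i t u → pref i s u

/-- The set of feasible strategy profiles of a game. -/
def Game.profiles (G : Game ι σ) : Set (∀ i, σ i) := {s | ∀ i, s i ∈ G.S i}

/-- The strict part of player `i`'s preference. -/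
def Game.StrictPref (G : Game ι σ) (i : ι) (s t : ∀ j, σ j) : Prop :=
  G.pref i s t ∧ ¬ G.pref i t s

/-- Nash equilibrium: a feasible profile from which no player can unilaterally
deviate to a strictly preferred profile. -/
def Game.IsNash [DecidableEq ι] (G : Game ι σ) (s : ∀ i, σ i) : Prop :=
  s ∈ G.profiles ∧ ∀ i, ∀ t ∈ G.S i, G.pref i s (Function.update s i t)

/-- `G'` is a reduction of `G`: same players, nonempty subsets of strategy
sets, preferences restricted to the smaller profile set. -/
def IsReduction (G' G : Game ι σ) : Prop :=
  (∀ i, G'.S i ⊆ G.S i) ∧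
  ∀ i s t, G'.pref i s t ↔ (G.pref i s t ∧ s ∈ G'.profiles ∧ t ∈ G'.profiles)

/-- `G'` is a strict reduction of `G`: a reduction obtained by removing at
least one strategy, every removed strategy being strictly dominated by some
remaining strategy of the same player. -/
def IsStrictReduction [DecidableEq ι] (G' G : Game ι σ) : Prop :=
  IsReduction G' G ∧ (∃ j, (G.S j \ G'.S j).Nonempty) ∧
  ∀ i, ∀ si ∈ G.S i \ G'.S i, ∃ si' ∈ G'.S i,
    ∀ s ∈ G.profiles, G.StrictPref i (Function.update s i si') (Function.update s i si)

/-- `s` is a profile of strategies each of which maximizes its player's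
preference uniformly over all opponents' profiles (weak dominance). -/
def JointlyOptimal [DecidableEq ι] (G : Game ι σ) (s : ∀ i, σ i) : Prop :=
  s ∈ G.profiles ∧ ∀ i, ∀ t ∈ G.profiles, ∀ u ∈ G.S i,
    G.pref i (Function.update t i (s i)) (Function.update t i u)

/-- The reduction `G'` of `G` has a dummy player. -/
def HasDummy (G' G : Game ι σ) : Prop :=
  ∃ j, (∃ x, G'.S j = {x}) ∧ ∀ i, i ≠ j → G'.S i = G.S i ∨ ∃ x, G'.S i = {x}

/-- The reduction `G'` of `G` has a quasi-dummy player. -/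
def HasQuasiDummy (G' G : Game ι σ) : Prop :=
  ∃ j, (∃ x y : σ j, x ≠ y ∧ G'.S j = {x, y}) ∧
    ∀ i, i ≠ j → G'.S i = G.S i ∨ ∃ x y : σ i, G'.S i ⊆ {x, y}

/-- A class of games is d-closed if it contains every reduction with a dummy
or quasi-dummy player of each of its games. -/
def DClosed (Γ : Set (Game ι σ)) : Prop :=
  ∀ G ∈ Γ, ∀ G', IsReduction G' G → (HasDummy G' G ∨ HasQuasiDummy G' G) → G' ∈ Γ

/-- Independence of irrelevant strategies. -/
def SatIIS (Γ : Set (Game ι σ)) (φ : Game ι σ → Set (∀ i, σ i)) : Prop :=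
  ∀ G ∈ Γ, ∀ G' ∈ Γ, IsReduction G' G → G'.profiles ∩ φ G ⊆ φ G'

/-- Merging consistency. -/
def SatMC (Γ : Set (Game ι σ)) (φ : Game ι σ → Set (∀ i, σ i)) : Prop :=
  ∀ G ∈ Γ, ∀ G' ∈ Γ, ∀ G'' ∈ Γ, IsReduction G' G → IsReduction G'' G →
    (∀ i, G'.S i ∪ G''.S i = G.S i) → φ G' ∩ φ G'' ⊆ φ G

/-- Invariance to strictly dominated strategies. -/
def SatISDS [DecidableEq ι] (Γ : Set (Game ι σ)) (φ : Game ι σ → Set (∀ i, σ i)) : Prop :=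
  ∀ G ∈ Γ, ∀ G' ∈ Γ, IsStrictReduction G' G → φ G = φ G'

/-- Joint optimality. -/
def SatJO [DecidableEq ι] (Γ : Set (Game ι σ)) (φ : Game ι σ → Set (∀ i, σ i)) : Prop :=
  ∀ G ∈ Γ, ∀ s, JointlyOptimal G s → s ∈ φ G

/-- The Nash equilibrium correspondence satisfies Merging Consistency. -/
theorem nash_MC [DecidableEq ι] [Fintype ι] (G G' G'' : Game ι σ)
    (hred' : IsReduction G' G) (hred'' : IsReduction G'' G)
    (hmerge : ∀ i, G'.S i ∪ G''.S i = G.S i) (s : ∀ i, σ i)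
    (h' : G'.IsNash s) (h'' : G''.IsNash s) :
    G.IsNash s := by
  obtain ⟨hs', hn'⟩ := h'
  obtain ⟨hs'', hn''⟩ := h''
  refine ⟨fun i => hred'.1 i (hs' i), fun i t ht => ?_⟩
  rw [← hmerge i] at ht
  rcases ht with ht | ht
  · exact ((hred'.2 i s _).mp (hn' i t ht)).1
  · exact ((hred''.2 i s _).mp (hn'' i t ht)).1
end

section
/- Let Γ be a d-closed class of normal-form games and φ a solution concept on Γ satisfying Independence of Irrelevant Strategies, Invariance to Strictly Dominated Strategies, and Joint Optimality. Then for every game G in Γ, every strategy profile in φ(G) is a Nash equilibrium of G. -/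
universe u v

variable {ι : Type u} {σ : ι → Type v}

/-- Restriction of a game to subsets of strategies. -/
def restrictGame (G : Game ι σ) (T : ∀ i, Set (σ i)) (hT : ∀ i, T i ⊆ G.S i)
    (hne : ∀ i, (T i).Nonempty) : Game ι σ where
  S := T
  nonempty := hne
  pref i s t := G.pref i s t ∧ (∀ j, s j ∈ T j) ∧ (∀ j, t j ∈ T j)
  complete i s t hs ht := by
    rcases G.complete i s t (fun j => hT j (hs j)) (fun j => hT j (ht j)) with h | h
    · exact Or.inl ⟨h, hs, ht⟩
    · exact Or.inr ⟨h, ht, hs⟩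
  trans i s t u hs ht hu h1 h2 :=
    ⟨G.trans i s t u (fun j => hT j (hs j)) (fun j => hT j (ht j)) (fun j => hT j (hu j))
      h1.1 h2.1, hs, hu⟩

lemma restrictGame_isReduction (G : Game ι σ) (T : ∀ i, Set (σ i)) (hT : ∀ i, T i ⊆ G.S i)
    (hne : ∀ i, (T i).Nonempty) : IsReduction (restrictGame G T hT hne) G :=
  ⟨hT, fun _ _ _ => Iff.rfl⟩

/-- Lemma 1(a): on a d-closed class, any solution concept
satisfying IIS, ISDS and JO selects only Nash equilibria. -/
theorem sol_subset_nash [DecidableEq ι] [Fintype ι] [Nonempty ι]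
    (Γ : Set (Game ι σ)) (φ : Game ι σ → Set (∀ i, σ i))
    (hsol : ∀ G ∈ Γ, φ G ⊆ G.profiles) (hd : DClosed Γ)
    (hIIS : SatIIS Γ φ) (hISDS : SatISDS Γ φ) (hJO : SatJO Γ φ) :
    ∀ G ∈ Γ, ∀ s ∈ φ G, G.IsNash s := by
  intro G hG s hs
  have hsp : s ∈ G.profiles := hsol G hG hs
  refine ⟨hsp, ?_⟩
  intro i t ht
  by_contra hcon
  set u : ∀ j, σ j := Function.update s i t with hu
  have hui : u i = t := Function.update_self i t s
  have hun : ∀ j, j ≠ i → u j = s j := fun j hj => Function.update_of_ne hj t s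
  have hup : u ∈ G.profiles := by
    intro j
    by_cases hj : j = i
    · subst hj; rw [hui]; exact ht
    · rw [hun j hj]; exact hsp j
  have hne : s i ≠ t := by
    intro h
    have : u = s := by rw [hu, ← h]; exact Function.update_eq_self i s
    rw [this] at hcon
    exact hcon ((G.complete i s s hsp hsp).elim id id)
  have hpref : G.pref i u s := (G.complete i s u hsp hup).resolve_left hcon
  -- the quasi-dummy reduction
  set T' : ∀ j, Set (σ j) := fun j => {s j, u j} with hT'
  have hT'sub : ∀ j, T' j ⊆ G.S j := by
    intro j x hx
    rcases hx with h | h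
    · rw [h]; exact hsp j
    · rw [h]; exact hup j
  have hT'ne : ∀ j, (T' j).Nonempty := fun j => ⟨s j, Or.inl rfl⟩
  set G' := restrictGame G T' hT'sub hT'ne with hG'def
  have redG' : IsReduction G' G := restrictGame_isReduction G T' hT'sub hT'ne
  have hG'mem : G' ∈ Γ := by
    refine hd G hG G' redG' (Or.inr ⟨i, ⟨s i, t, hne, ?_⟩, fun j _ => Or.inr ⟨s j, u j, subset_refl _⟩⟩)
    show T' i = {s i, t}
    rw [hT']; simp [hui]
  -- the dummy reduction
  set T'' : ∀ j, Set (σ j) := fun j => {u j} with hT''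
  have hT''sub : ∀ j, T'' j ⊆ G.S j := by
    intro j x hx; rw [Set.mem_singleton_iff] at hx; rw [hx]; exact hup j
  have hT''ne : ∀ j, (T'' j).Nonempty := fun j => ⟨u j, rfl⟩
  set G'' := restrictGame G T'' hT''sub hT''ne with hG''def
  have redG'' : IsReduction G'' G := restrictGame_isReduction G T'' hT''sub hT''ne
  have hG''mem : G'' ∈ Γ := by
    refine hd G hG G'' redG'' (Or.inl ⟨i, ⟨u i, rfl⟩, fun j _ => Or.inr ⟨u j, rfl⟩⟩)
  -- s is in φ G'
  have hsT' : ∀ j, s j ∈ T' j := fun j => Or.inl rfl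
  have hsG' : s ∈ φ G' := hIIS G hG G' hG'mem redG' ⟨hsT', hs⟩
  -- G'' is a strict reduction of G'
  have hsub'' : ∀ j, T'' j ⊆ T' j := by
    intro j x hx; rw [Set.mem_singleton_iff] at hx; exact Or.inr hx
  have red'' : IsReduction G'' G' := by
    constructor
    · exact hsub''
    · intro j a b
      show (G.pref j a b ∧ (∀ k, a k ∈ T'' k) ∧ (∀ k, b k ∈ T'' k)) ↔ _
      constructor
      · rintro ⟨h1, h2, h3⟩
        exact ⟨⟨h1, fun k => hsub'' k (h2 k), fun k => hsub'' k (h3 k)⟩, h2, h3⟩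
      · rintro ⟨⟨h1, _, _⟩, h2, h3⟩
        exact ⟨h1, h2, h3⟩
  have hstrict : IsStrictReduction G'' G' := by
    refine ⟨red'', ⟨i, s i, Or.inl rfl, ?_⟩, ?_⟩
    · intro hsi
      have hsi2 : s i = u i := hsi
      exact hne (hsi2.trans hui)
    · intro j sj hsj
      obtain ⟨hsj1, hsj2'⟩ := hsj
      have hsj2 : sj ≠ u j := fun h => hsj2' h
      have hsj3 : sj = s j := by
        rcases hsj1 with h | h
        · exact h
        · exact absurd h hsj2
      have hji : j = i := by
        by_contra hji
        exact hsj2 (hsj3.trans (hun j hji).symm)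
      subst hji
      refine ⟨u j, rfl, ?_⟩
      intro p hp
      have hpj : ∀ k, k ≠ j → p k = s k := by
        intro k hk
        rcases hp k with h | h
        · exact h
        · exact h.trans (hun k hk)
      have e1 : Function.update p j (u j) = u := by
        funext k
        by_cases hk : k = j
        · subst hk; exact Function.update_self k (u k) p
        · rw [Function.update_of_ne hk, hpj k hk, hun k hk]
      have e2 : Function.update p j sj = s := by
        funext k
        by_cases hk : k = j
        · subst hk; rw [Function.update_self, hsj3]
        · rw [Function.update_of_ne hk, hpj k hk]
      rw [e1, e2]
      constructor
      · exact ⟨hpref, fun k => Or.inr rfl, hsT'⟩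
      · intro hbad
        exact hcon hbad.1
  -- conclude
  have : s ∈ φ G'' := (hISDS G' hG'mem G'' hG''mem hstrict) ▸ hsG'
  have hsi : s i = u i := hsol G'' hG''mem this i
  exact hne (hsi.trans hui)
end

section
/- Let Γ be a d-closed class of normal-form games and φ a solution concept on Γ satisfying Merging Consistency and Joint Optimality. Then for every game G in Γ, every Nash equilibrium of G belongs to φ(G). -/
universe u v

variable {ι : Type u} {σ : ι → Type v}

section AuxNash

variable [DecidableEq ι]

lemma pref_refl (G : Game ι σ) (i : ι) {x : ∀ j, σ j} (hx : ∀ j, x j ∈ G.S j) :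
    G.pref i x x := (G.complete i x x hx hx).elim id id

lemma mem_lift (G : Game ι σ) (s : ∀ i, σ i) (hs : ∀ j, s j ∈ G.S j) (T : Finset ι)
    {a : ∀ i, σ i} (ha : ∀ j, a j ∈ (if j ∈ T then G.S j else ({s j} : Set (σ j)))) :
    ∀ j, a j ∈ G.S j := by
  intro j
  by_cases h : j ∈ T
  · simpa [h] using ha j
  · have := ha j
    simp [h] at this
    simpa [this] using hs j

/-- The reduction of `G` in which players in `T` keep their full strategy
sets and every other player is fixed to play `s`. -/
def Gsub (G : Game ι σ) (s : ∀ i, σ i) (hs : ∀ j, s j ∈ G.S j) (T : Finset ι) :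
    Game ι σ where
  S i := if i ∈ T then G.S i else {s i}
  nonempty i := by
    by_cases h : i ∈ T
    · simpa [h] using G.nonempty i
    · simp [h]
  pref i a b := G.pref i a b ∧ (∀ j, a j ∈ (if j ∈ T then G.S j else ({s j} : Set (σ j))))
    ∧ (∀ j, b j ∈ (if j ∈ T then G.S j else ({s j} : Set (σ j))))
  complete i a b ha hb := by
    rcases G.complete i a b (mem_lift G s hs T ha) (mem_lift G s hs T hb) with h | h
    · exact Or.inl ⟨h, ha, hb⟩
    · exact Or.inr ⟨h, hb, ha⟩
  trans i a b c _ _ _ h1 h2 :=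
    ⟨G.trans i a b c (mem_lift G s hs T h1.2.1) (mem_lift G s hs T h1.2.2)
      (mem_lift G s hs T h2.2.2) h1.1 h2.1, h1.2.1, h2.2.2⟩

lemma Gsub_profiles (G : Game ι σ) (s : ∀ i, σ i) (hs : ∀ j, s j ∈ G.S j) (T : Finset ι)
    (a : ∀ i, σ i) :
    a ∈ (Gsub G s hs T).profiles ↔
      ∀ j, a j ∈ (if j ∈ T then G.S j else ({s j} : Set (σ j))) := Iff.rfl

lemma Gsub_reduction (G : Game ι σ) (s : ∀ i, σ i) (hs : ∀ j, s j ∈ G.S j) (T : Finset ι) :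
    IsReduction (Gsub G s hs T) G := by
  constructor
  · intro i x hx
    by_cases h : i ∈ T
    · simpa [Gsub, h] using hx
    · have : x = s i := by simpa [Gsub, h] using hx
      simpa [this] using hs i
  · intro i a b
    exact Iff.rfl

lemma Gsub_mono (G : Game ι σ) (s : ∀ i, σ i) (hs : ∀ j, s j ∈ G.S j) {T' T : Finset ι}
    (hT : T' ⊆ T) : IsReduction (Gsub G s hs T') (Gsub G s hs T) := by
  have hmem : ∀ a : ∀ i, σ i,
      (∀ j, a j ∈ (if j ∈ T' then G.S j else ({s j} : Set (σ j)))) →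
      ∀ j, a j ∈ (if j ∈ T then G.S j else ({s j} : Set (σ j))) := by
    intro a ha j
    by_cases h : j ∈ T
    · simpa [h] using mem_lift G s hs T' ha j
    · have h' : j ∉ T' := fun hc => h (hT hc)
      have := ha j
      simpa [h, h'] using this
  constructor
  · intro i x hx
    by_cases h' : i ∈ T'
    · have h : i ∈ T := hT h'
      simpa [Gsub, h] using (by simpa [Gsub, h'] using hx : x ∈ G.S i)
    · have : x = s i := by simpa [Gsub, h'] using hx
      subst this
      by_cases h : i ∈ T
      · simpa [Gsub, h] using hs i
      · simp [Gsub, h]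
  · intro i a b
    show _ ↔ (G.pref i a b ∧ _ ∧ _) ∧ _ ∧ _
    constructor
    · rintro ⟨h, ha, hb⟩
      exact ⟨⟨h, hmem a ha, hmem b hb⟩, ha, hb⟩
    · rintro ⟨⟨h, _, _⟩, ha, hb⟩
      exact ⟨h, ha, hb⟩

lemma Gsub_dummy [Fintype ι] (G : Game ι σ) (s : ∀ i, σ i) (hs : ∀ j, s j ∈ G.S j) {T : Finset ι}
    (hT : T ≠ Finset.univ) : HasDummy (Gsub G s hs T) G := by
  obtain ⟨j, hj⟩ : ∃ j, j ∉ T := by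
    by_contra h
    push_neg at h
    exact hT (Finset.eq_univ_of_forall h)
  refine ⟨j, ⟨s j, by simp [Gsub, hj]⟩, ?_⟩
  intro i _
  by_cases h : i ∈ T
  · exact Or.inl (by simp [Gsub, h])
  · exact Or.inr ⟨s i, by simp [Gsub, h]⟩

lemma Gsub_mem_Gamma [Fintype ι] {Γ : Set (Game ι σ)} (hd : DClosed Γ) {G : Game ι σ} (hG : G ∈ Γ)
    (s : ∀ i, σ i) (hs : ∀ j, s j ∈ G.S j) {T : Finset ι} (hT : T ≠ Finset.univ) :
    Gsub G s hs T ∈ Γ :=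
  hd G hG _ (Gsub_reduction G s hs T) (Or.inl (Gsub_dummy G s hs hT))

lemma Gsub_jointlyOptimal (G : Game ι σ) (s : ∀ i, σ i) (hs : ∀ j, s j ∈ G.S j)
    (hN : G.IsNash s) (i : ι) {T : Finset ι} (hT : T ⊆ {i}) :
    JointlyOptimal (Gsub G s hs T) s := by
  have hsP : s ∈ (Gsub G s hs T).profiles := by
    intro j
    by_cases h : j ∈ T
    · simpa [Gsub, h] using hs j
    · simp [Gsub, h]
  refine ⟨hsP, ?_⟩
  intro k t ht u hu
  rw [Gsub_profiles] at ht
  have hmem1 : ∀ j, Function.update t k (s k) j ∈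
      (if j ∈ T then G.S j else ({s j} : Set (σ j))) := by
    intro j
    rcases eq_or_ne j k with rfl | h
    · simp only [Function.update_self]
      by_cases h' : j ∈ T
      · simpa [h'] using hs j
      · simp [h']
    · simpa [Function.update_of_ne h] using ht j
  have hmem2 : ∀ j, Function.update t k u j ∈
      (if j ∈ T then G.S j else ({s j} : Set (σ j))) := by
    intro j
    rcases eq_or_ne j k with rfl | h
    · simp only [Function.update_self]
      exact hu
    · simpa [Function.update_of_ne h] using ht j
  refine ⟨?_, hmem1, hmem2⟩
  by_cases hk : k ∈ T
  · -- then k = i and all other players play s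
    have hki : k = i := by simpa using hT hk
    have hothers : ∀ j, j ≠ k → t j = s j := by
      intro j hj
      have hjT : j ∉ T := by
        intro hc
        have : j = i := by simpa using hT hc
        exact hj (this.trans hki.symm)
      have := ht j
      simpa [hjT] using this
    have e1 : Function.update t k (s k) = s := by
      funext j
      rcases eq_or_ne j k with rfl | h
      · simp
      · simp [Function.update_of_ne h, hothers j h]
    have e2 : Function.update t k u = Function.update s k u := by
      funext j
      rcases eq_or_ne j k with rfl | h
      · simp
      · simp [Function.update_of_ne h, hothers j h]
    rw [e1, e2]
    exact hN.2 k u (by simpa [Gsub, hk] using hu)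
  · -- k is a fixed player: u = s k, reflexivity
    have hu' : u = s k := by simpa [Gsub, hk] using hu
    subst hu'
    exact pref_refl G k (mem_lift G s hs T hmem1)

end AuxNash

/-- Lemma 1(b): on a d-closed class, any solution concept
satisfying MC and JO selects all Nash equilibria. -/
theorem nash_subset_sol [DecidableEq ι] [Fintype ι] [Nonempty ι]
    (Γ : Set (Game ι σ)) (φ : Game ι σ → Set (∀ i, σ i))
    (hsol : ∀ G ∈ Γ, φ G ⊆ G.profiles) (hd : DClosed Γ)
    (hMC : SatMC Γ φ) (hJO : SatJO Γ φ) :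
    ∀ G ∈ Γ, ∀ s, G.IsNash s → s ∈ φ G := by
  intro G hG s hN
  have hs : ∀ j, s j ∈ G.S j := hN.1
  by_cases hsub : ∀ j k : ι, j = k
  · -- at most one player: s is jointly optimal in G itself
    apply hJO G hG s
    refine ⟨hs, ?_⟩
    intro i t ht u hu
    have e1 : Function.update t i (s i) = s := by
      funext j
      have : j = i := hsub j i
      subst this
      simp
    have e2 : Function.update t i u = Function.update s i u := by
      funext j
      have : j = i := hsub j i
      subst this
      simp
    rw [e1, e2]
    exact hN.2 i u hu
  · push_neg at hsub
    obtain ⟨j0, k0, hjk⟩ := hsub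
    -- singleton games: s is selected by JO
    have hsingle : ∀ i : ι, ({i} : Finset ι) ≠ Finset.univ → s ∈ φ (Gsub G s hs {i}) := by
      intro i hi
      exact hJO _ (Gsub_mem_Gamma hd hG s hs hi) s
        (Gsub_jointlyOptimal G s hs hN i (le_refl _))
    -- union of strategy sets lemma
    have hunion : ∀ (T : Finset ι) (i : ι), i ∉ T →
        ∀ m, (Gsub G s hs T).S m ∪ (Gsub G s hs {i}).S m = (Gsub G s hs (insert i T)).S m := by
      intro T i hiT m
      by_cases hm : m ∈ T
      · have hmi : m ≠ i := fun h => hiT (h ▸ hm)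
        simp only [Gsub, if_pos hm, if_neg (by simpa using hmi : m ∉ ({i} : Finset ι)),
          if_pos (Finset.mem_insert_of_mem hm)]
        exact Set.union_eq_self_of_subset_right (Set.singleton_subset_iff.2 (hs m))
      · rcases eq_or_ne m i with rfl | hmi
        · simp only [Gsub, if_neg hm, if_pos (Finset.mem_singleton_self m),
            if_pos (Finset.mem_insert_self m T)]
          exact Set.union_eq_self_of_subset_left (Set.singleton_subset_iff.2 (hs m))
        · have : m ∉ insert i T := by simp [hm, hmi]
          simp only [Gsub, if_neg hm, if_neg (by simpa using hmi : m ∉ ({i} : Finset ι)),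
            if_neg this]
          exact Set.union_self _
    -- main induction: s ∈ φ (Gsub T) for all T ≠ univ
    have claim : ∀ T : Finset ι, T ≠ Finset.univ → s ∈ φ (Gsub G s hs T) := by
      intro T
      induction T using Finset.induction_on with
      | empty =>
        intro hT
        exact hJO _ (Gsub_mem_Gamma hd hG s hs hT) s
          (Gsub_jointlyOptimal G s hs hN (Classical.arbitrary ι)
            (Finset.empty_subset _))
      | insert i T hiT ih =>
        intro hT
        have hTne : T ≠ Finset.univ := by
          intro h
          subst h
          exact hT (Finset.insert_eq_self.2 (Finset.mem_univ i))
        have hiu : ({i} : Finset ι) ≠ Finset.univ := by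
          intro h
          apply hT
          apply Finset.eq_univ_of_forall
          intro m
          have : m ∈ ({i} : Finset ι) := h ▸ Finset.mem_univ m
          simp at this
          simp [this]
        exact hMC _ (Gsub_mem_Gamma hd hG s hs hT)
          _ (Gsub_mem_Gamma hd hG s hs hTne)
          _ (Gsub_mem_Gamma hd hG s hs hiu)
          (Gsub_mono G s hs (Finset.subset_insert i T))
          (Gsub_mono G s hs (Finset.singleton_subset_iff.2 (Finset.mem_insert_self i T)))
          (hunion T i hiT) ⟨ih hTne, hsingle i hiu⟩
    -- final merge into G itself
    have hT0 : (Finset.univ.erase j0) ≠ Finset.univ := by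
      intro h
      have h2 := Finset.notMem_erase j0 (Finset.univ : Finset ι)
      rw [h] at h2
      exact h2 (Finset.mem_univ j0)
    have hj0u : ({j0} : Finset ι) ≠ Finset.univ := by
      intro h
      have : k0 ∈ ({j0} : Finset ι) := h ▸ Finset.mem_univ k0
      simp at this
      exact hjk this.symm
    have hfinal : ∀ m, (Gsub G s hs (Finset.univ.erase j0)).S m ∪
        (Gsub G s hs {j0}).S m = G.S m := by
      intro m
      rcases eq_or_ne m j0 with rfl | hm
      · simp only [Gsub, if_neg (by simp : m ∉ Finset.univ.erase m),
          if_pos (Finset.mem_singleton_self m)]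
        exact Set.union_eq_self_of_subset_left (Set.singleton_subset_iff.2 (hs m))
      · simp only [Gsub, if_pos (Finset.mem_erase.2 ⟨hm, Finset.mem_univ m⟩),
          if_neg (by simpa using hm : m ∉ ({j0} : Finset ι))]
        exact Set.union_eq_self_of_subset_right (Set.singleton_subset_iff.2 (hs m))
    exact hMC G hG
      _ (Gsub_mem_Gamma hd hG s hs hT0)
      _ (Gsub_mem_Gamma hd hG s hs hj0u)
      (Gsub_reduction G s hs _) (Gsub_reduction G s hs _)
      hfinal ⟨claim _ hT0, hsingle j0 hj0u⟩
end

section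
/- Let Γ be a d-closed class of normal-form games. A solution concept φ on Γ satisfies IIS, MC, ISDS, and JO if and only if φ(G) equals the set of Nash equilibria of G for every G in Γ. -/
universe u v

variable {ι : Type u} {σ : ι → Type v}

section Aux

lemma Game.pref_refl (G : Game ι σ) (i : ι) {s : ∀ i, σ i} (hs : s ∈ G.profiles) :
    G.pref i s s := (G.complete i s s hs hs).elim id id

lemma update_mem_profiles [DecidableEq ι] (G : Game ι σ) {s : ∀ i, σ i}
    (hs : s ∈ G.profiles) {i : ι} {t : σ i} (ht : t ∈ G.S i) :
    Function.update s i t ∈ G.profiles := by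
  intro j
  rcases eq_or_ne j i with rfl | h
  · simpa using ht
  · simpa [Function.update_of_ne h] using hs j

/-- Restrict a game to smaller nonempty strategy sets. -/
def Game.restrict (G : Game ι σ) (T : ∀ i, Set (σ i)) (hsub : ∀ i, T i ⊆ G.S i)
    (hne : ∀ i, (T i).Nonempty) : Game ι σ where
  S := T
  nonempty := hne
  pref i s t := G.pref i s t ∧ (∀ j, s j ∈ T j) ∧ (∀ j, t j ∈ T j)
  complete i s t hs ht := by
    rcases G.complete i s t (fun j => hsub j (hs j)) (fun j => hsub j (ht j)) with h | h
    · exact Or.inl ⟨h, hs, ht⟩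
    · exact Or.inr ⟨h, ht, hs⟩
  trans i s t u hs ht hu h1 h2 :=
    ⟨G.trans i s t u (fun j => hsub j (hs j)) (fun j => hsub j (ht j))
      (fun j => hsub j (hu j)) h1.1 h2.1, hs, hu⟩

lemma restrict_isReduction (G : Game ι σ) (T : ∀ i, Set (σ i)) (hsub : ∀ i, T i ⊆ G.S i)
    (hne : ∀ i, (T i).Nonempty) : IsReduction (G.restrict T hsub hne) G :=
  ⟨hsub, fun _ _ _ => Iff.rfl⟩

lemma restrict_isReduction_of_subset (G : Game ι σ) (T T' : ∀ i, Set (σ i))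
    (hsub : ∀ i, T i ⊆ G.S i) (hne : ∀ i, (T i).Nonempty)
    (hsub' : ∀ i, T' i ⊆ G.S i) (hne' : ∀ i, (T' i).Nonempty)
    (hTT : ∀ i, T i ⊆ T' i) :
    IsReduction (G.restrict T hsub hne) (G.restrict T' hsub' hne') := by
  refine ⟨hTT, fun i s t => ?_⟩
  show (G.pref i s t ∧ _ ∧ _) ↔ ((G.pref i s t ∧ _ ∧ _) ∧ _ ∧ _)
  constructor
  · rintro ⟨h, hs, ht⟩
    exact ⟨⟨h, fun j => hTT j (hs j), fun j => hTT j (ht j)⟩, hs, ht⟩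
  · rintro ⟨⟨h, _, _⟩, hs, ht⟩
    exact ⟨h, hs, ht⟩

/-- The reduction of `G` in which player `i` may use the strategies in `Ti`
and every other player `j` is frozen at `s j`. -/
def pairGame [DecidableEq ι] (G : Game ι σ) (s : ∀ i, σ i) (hs : s ∈ G.profiles)
    (i : ι) (Ti : Set (σ i)) (hTi : Ti ⊆ G.S i) (hne : Ti.Nonempty) : Game ι σ :=
  G.restrict (Function.update (fun k => ({s k} : Set (σ k))) i Ti)
    (fun j x hx => by
      rcases eq_or_ne j i with rfl | h
      · exact hTi (by simpa using hx)
      · rw [Function.update_of_ne h] at hx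
        simp only [Set.mem_singleton_iff] at hx
        subst hx
        exact hs j)
    (fun j => by
      rcases eq_or_ne j i with rfl | h
      · simpa using hne
      · exact ⟨s j, by rw [Function.update_of_ne h]; exact rfl⟩)

@[simp] lemma pairGame_S_same [DecidableEq ι] {G : Game ι σ} {s : ∀ i, σ i}
    {hs : s ∈ G.profiles} {i : ι} {Ti : Set (σ i)} {hTi : Ti ⊆ G.S i} {hne : Ti.Nonempty} :
    (pairGame G s hs i Ti hTi hne).S i = Ti := by
  show Function.update (fun k => ({s k} : Set (σ k))) i Ti i = Ti
  simp

lemma pairGame_S_ne [DecidableEq ι] {G : Game ι σ} {s : ∀ i, σ i}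
    {hs : s ∈ G.profiles} {i : ι} {Ti : Set (σ i)} {hTi : Ti ⊆ G.S i} {hne : Ti.Nonempty}
    {j : ι} (h : j ≠ i) : (pairGame G s hs i Ti hTi hne).S j = {s j} := by
  show Function.update (fun k => ({s k} : Set (σ k))) i Ti j = {s j}
  rw [Function.update_of_ne h]

/-- The reduction of `G` in which players in `A` keep their full strategy sets
and players outside `A` are frozen at `s`. -/
def gameOn [DecidableEq ι] (G : Game ι σ) (s : ∀ i, σ i) (hs : s ∈ G.profiles)
    (A : Finset ι) : Game ι σ :=
  G.restrict (fun j => if j ∈ A then G.S j else {s j})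
    (fun j x hx => by
      by_cases h : j ∈ A
      · simpa [h] using hx
      · simp only [if_neg h, Set.mem_singleton_iff] at hx
        subst hx
        exact hs j)
    (fun j => ⟨s j, by by_cases h : j ∈ A <;> simp [h, hs j]⟩)

@[simp] lemma gameOn_S [DecidableEq ι] (G : Game ι σ) (s : ∀ i, σ i)
    (hs : s ∈ G.profiles) (A : Finset ι) (j : ι) :
    (gameOn G s hs A).S j = if j ∈ A then G.S j else {s j} := rfl

end Aux

/-- Theorem 1: on a d-closed class, a solution concept satisfies
IIS, MC, ISDS and JO iff it is the Nash equilibrium correspondence. -/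
theorem nash_characterization [DecidableEq ι] [Fintype ι] [Nonempty ι]
    (Γ : Set (Game ι σ)) (φ : Game ι σ → Set (∀ i, σ i))
    (hsol : ∀ G ∈ Γ, φ G ⊆ G.profiles) (hd : DClosed Γ) :
    (SatIIS Γ φ ∧ SatMC Γ φ ∧ SatISDS Γ φ ∧ SatJO Γ φ) ↔
      ∀ G ∈ Γ, φ G = {s | G.IsNash s} := by
  constructor
  · rintro ⟨hIIS, hMC, hISDS, hJO⟩ G hG
    apply Set.Subset.antisymm
    · -- φ G ⊆ Nash
      intro s hsφ
      have hs : s ∈ G.profiles := hsol G hG hsφ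
      simp only [Set.mem_setOf_eq]
      refine ⟨hs, fun i t ht => ?_⟩
      by_contra hbad
      have hne : t ≠ s i := by
        rintro rfl
        exact hbad (by simpa [Function.update_eq_self] using G.pref_refl i hs)
      have hsub1 : ({s i, t} : Set (σ i)) ⊆ G.S i := by
        intro x hx
        rcases hx with hx | hx
        · subst hx; exact hs i
        · simp only [Set.mem_singleton_iff] at hx; subst hx; exact ht
      have hsub2 : ({t} : Set (σ i)) ⊆ G.S i := by
        intro x hx
        simp only [Set.mem_singleton_iff] at hx; subst hx; exact ht
      set G1 := pairGame G s hs i {s i, t} hsub1 (Set.insert_nonempty _ _) with hG1def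
      set G2 := pairGame G s hs i {t} hsub2 (Set.singleton_nonempty t) with hG2def
      have hred1 : IsReduction G1 G := restrict_isReduction G _ _ _
      have hG1 : G1 ∈ Γ := by
        refine hd G hG G1 hred1 (Or.inr ⟨i, ⟨s i, t, Ne.symm hne, ?_⟩, fun j hj => ?_⟩)
        · exact pairGame_S_same
        · exact Or.inr ⟨s j, s j, by rw [hG1def, pairGame_S_ne hj]; simp⟩
      have hsprof1 : s ∈ G1.profiles := by
        intro j
        rcases eq_or_ne j i with rfl | h
        · rw [hG1def, pairGame_S_same]
          exact Set.mem_insert _ _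
        · rw [hG1def, pairGame_S_ne h]
          exact rfl
      have hs1 : s ∈ φ G1 := hIIS G hG G1 hG1 hred1 ⟨hsprof1, hsφ⟩
      have hred21 : IsReduction G2 G1 := by
        refine restrict_isReduction_of_subset G _ _ _ _ _ _ (fun j x hx => ?_)
        rcases eq_or_ne j i with rfl | h
        · rw [Function.update_self] at hx ⊢
          simp only [Set.mem_singleton_iff] at hx
          subst hx
          exact Set.mem_insert_of_mem _ rfl
        · rwa [Function.update_of_ne h] at hx ⊢
      have hG2 : G2 ∈ Γ := by
        refine hd G1 hG1 G2 hred21 (Or.inl ⟨i, ⟨t, ?_⟩, fun j hj => ?_⟩)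
        · exact pairGame_S_same
        · exact Or.inr ⟨s j, pairGame_S_ne hj⟩
      have hstrict : IsStrictReduction G2 G1 := by
        refine ⟨hred21, ⟨i, s i, ?_⟩, fun k sk hsk => ?_⟩
        · rw [hG1def, hG2def, pairGame_S_same, pairGame_S_same]
          exact ⟨Set.mem_insert _ _, fun hc => (Ne.symm hne) (Set.mem_singleton_iff.mp hc)⟩
        · rcases eq_or_ne k i with rfl | hk
          · have hsk1 : sk ∈ ({s k, t} : Set (σ k)) := by
              have := hsk.1; rwa [hG1def, pairGame_S_same] at this
            have hsk2 : sk ∉ ({t} : Set (σ k)) := by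
              have := hsk.2; rwa [hG2def, pairGame_S_same] at this
            have hsk' : sk = s k := by
              rcases hsk1 with h | h
              · exact h
              · exact absurd h hsk2
            subst hsk'
            refine ⟨t, by rw [hG2def, pairGame_S_same]; rfl, fun u hu => ?_⟩
            have huj : ∀ j, j ≠ k → u j = s j := fun j hj => by
              have := hu j
              rw [hG1def, pairGame_S_ne hj] at this
              exact this
            have e1 : Function.update u k t = Function.update s k t := funext fun j => by
              rcases eq_or_ne j k with rfl | hj
              · simp
              · simp [Function.update_of_ne hj, huj j hj]
            have e2 : Function.update u k (s k) = s := funext fun j => by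
              rcases eq_or_ne j k with rfl | hj
              · simp
              · simp [Function.update_of_ne hj, huj j hj]
            rw [e1, e2]
            have hfeas1 : Function.update s k t ∈ G1.profiles := by
              intro j
              rcases eq_or_ne j k with rfl | hj
              · rw [hG1def, pairGame_S_same]
                simp
              · rw [hG1def, pairGame_S_ne hj]
                simp [Function.update_of_ne hj]
            have hGp : G.pref k (Function.update s k t) s := by
              rcases G.complete k s (Function.update s k t) hs (update_mem_profiles G hs ht)
                with h | h
              · exact absurd h hbad
              · exact h
            exact ⟨⟨hGp, hfeas1, hsprof1⟩, fun hc => hbad hc.1⟩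
          · exfalso
            have h1 := hsk.1
            have h2 := hsk.2
            rw [hG1def, pairGame_S_ne hk] at h1
            rw [hG2def, pairGame_S_ne hk] at h2
            exact h2 h1
      have hφG2 : s ∈ φ G2 := (hISDS G1 hG1 G2 hG2 hstrict) ▸ hs1
      have hfin := hsol G2 hG2 hφG2 i
      rw [hG2def, pairGame_S_same] at hfin
      exact hne (Set.mem_singleton_iff.mp hfin).symm
    · -- Nash ⊆ φ G
      intro s hsN
      simp only [Set.mem_setOf_eq] at hsN
      obtain ⟨hs, hnash⟩ := hsN
      by_cases hsing : ∀ (j k : ι), j = k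
      · -- essentially one player: use JO directly
        apply hJO G hG s
        refine ⟨hs, fun k u hu v hv => ?_⟩
        have e1 : Function.update u k (s k) = s := funext fun j => by
          have hj := hsing j k; subst hj; simp
        have e2 : Function.update u k v = Function.update s k v := funext fun j => by
          have hj := hsing j k; subst hj; simp
        rw [e1, e2]
        exact hnash k v hv
      · push_neg at hsing
        obtain ⟨j₀, k₀, hjk⟩ := hsing
        have hsprofA : ∀ A : Finset ι, s ∈ (gameOn G s hs A).profiles := by
          intro A j
          by_cases h : j ∈ A <;> simp [gameOn_S, h, hs j]
        have hredA : ∀ A : Finset ι, IsReduction (gameOn G s hs A) G :=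
          fun A => restrict_isReduction G _ _ _
        have hredAB : ∀ A B : Finset ι, A ⊆ B →
            IsReduction (gameOn G s hs A) (gameOn G s hs B) := by
          intro A B hAB
          refine restrict_isReduction_of_subset G _ _ _ _ _ _ (fun j x hx => ?_)
          by_cases hB : j ∈ B
          · simp only [if_pos hB]
            by_cases hA : j ∈ A
            · simpa [hA] using hx
            · simp only [if_neg hA, Set.mem_singleton_iff] at hx
              subst hx
              exact hs j
          · have hA : j ∉ A := fun h => hB (hAB h)
            simp only [if_neg hA] at hx
            simpa [if_neg hB] using hx
        have hΓA : ∀ A : Finset ι, A ≠ Finset.univ → gameOn G s hs A ∈ Γ := by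
          intro A hA
          obtain ⟨j, hj⟩ : ∃ j, j ∉ A := by
            by_contra h
            push_neg at h
            exact hA (Finset.eq_univ_iff_forall.mpr h)
          refine hd G hG _ (hredA A) (Or.inl ⟨j, ⟨s j, by simp [gameOn_S, hj]⟩,
            fun k hk => ?_⟩)
          by_cases h : k ∈ A
          · exact Or.inl (by simp [gameOn_S, h])
          · exact Or.inr ⟨s k, by simp [gameOn_S, h]⟩
        have hJOsmall : ∀ (i : ι) (A : Finset ι), A ⊆ {i} →
            JointlyOptimal (gameOn G s hs A) s := by
          intro i A hA
          refine ⟨hsprofA A, fun k u hu v hv => ?_⟩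
          by_cases hk : k ∈ A
          · have hki : k = i := Finset.mem_singleton.mp (hA hk)
            have hvG : v ∈ G.S k := by
              have := hv
              rw [gameOn_S, if_pos hk] at this
              exact this
            have huj : ∀ j, j ≠ k → u j = s j := fun j hj => by
              have hjA : j ∉ A := fun h => hj (by
                rw [Finset.mem_singleton.mp (hA h), hki])
              have := hu j
              rw [gameOn_S, if_neg hjA] at this
              exact this
            have e1 : Function.update u k (s k) = s := funext fun j => by
              rcases eq_or_ne j k with rfl | hj
              · simp
              · simp [Function.update_of_ne hj, huj j hj]
            have e2 : Function.update u k v = Function.update s k v := funext fun j => by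
              rcases eq_or_ne j k with rfl | hj
              · simp
              · simp [Function.update_of_ne hj, huj j hj]
            rw [e1, e2]
            refine ⟨hnash k v hvG, hsprofA A, fun j => ?_⟩
            rcases eq_or_ne j k with rfl | hj
            · simpa using hv
            · simpa [Function.update_of_ne hj] using hsprofA A j
          · have hv' : v = s k := by
              have := hv
              rw [gameOn_S, if_neg hk] at this
              exact this
            subst hv'
            exact (gameOn G s hs A).pref_refl k (update_mem_profiles _ hu hv)
        have hφA : ∀ A : Finset ι, A ≠ Finset.univ → s ∈ φ (gameOn G s hs A) := by
          intro A
          induction A using Finset.induction_on with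
          | empty =>
            intro h
            exact hJO _ (hΓA ∅ h) s (hJOsmall (Classical.arbitrary ι) ∅ (by simp))
          | @insert i A hiA ih =>
            intro hins
            have hAne : A ≠ Finset.univ := by
              intro h
              exact hins (by rw [h, Finset.insert_eq_self.mpr (Finset.mem_univ i)])
            have hine : ({i} : Finset ι) ≠ Finset.univ := by
              intro h
              apply hins
              apply Finset.eq_univ_iff_forall.mpr
              intro k
              have : k ∈ ({i} : Finset ι) := h ▸ Finset.mem_univ k
              exact Finset.mem_insert.mpr (Or.inl (Finset.mem_singleton.mp this))
            have hun : ∀ k, (gameOn G s hs A).S k ∪ (gameOn G s hs {i}).S k =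
                (gameOn G s hs (insert i A)).S k := by
              intro k
              simp only [gameOn_S]
              by_cases hk : k ∈ A
              · have hki : k ≠ i := fun h => hiA (h ▸ hk)
                rw [if_pos hk, if_neg (by simpa using hki),
                  if_pos (Finset.mem_insert_of_mem hk)]
                exact Set.union_eq_self_of_subset_right
                  (Set.singleton_subset_iff.mpr (hs k))
              · by_cases hki : k = i
                · subst hki
                  rw [if_neg hk, if_pos (Finset.mem_singleton_self k),
                    if_pos (Finset.mem_insert_self k A)]
                  exact Set.union_eq_self_of_subset_left
                    (Set.singleton_subset_iff.mpr (hs k))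
                · rw [if_neg hk, if_neg (by simpa using hki),
                    if_neg (by simp [hk, hki])]
                  exact Set.union_self _
            exact hMC (gameOn G s hs (insert i A)) (hΓA _ hins)
              (gameOn G s hs A) (hΓA A hAne)
              (gameOn G s hs {i}) (hΓA _ hine)
              (hredAB A (insert i A) (Finset.subset_insert i A))
              (hredAB {i} (insert i A) (by
                intro k hk
                rw [Finset.mem_singleton] at hk
                subst hk
                exact Finset.mem_insert_self k A))
              hun ⟨ih hAne, hJO _ (hΓA _ hine) s (hJOsmall i {i} (le_refl _))⟩
        have hAcne : ({j₀}ᶜ : Finset ι) ≠ Finset.univ := by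
          intro h
          have : j₀ ∈ ({j₀}ᶜ : Finset ι) := h ▸ Finset.mem_univ j₀
          simp at this
        have hj₀ne : ({j₀} : Finset ι) ≠ Finset.univ := by
          intro h
          have : k₀ ∈ ({j₀} : Finset ι) := h ▸ Finset.mem_univ k₀
          rw [Finset.mem_singleton] at this
          exact hjk this.symm
        have hun : ∀ k, (gameOn G s hs {j₀}ᶜ).S k ∪ (gameOn G s hs {j₀}).S k = G.S k := by
          intro k
          simp only [gameOn_S]
          by_cases hk : k = j₀
          · subst hk
            rw [if_neg (by simp), if_pos (Finset.mem_singleton_self k)]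
            exact Set.union_eq_self_of_subset_left (Set.singleton_subset_iff.mpr (hs k))
          · rw [if_pos (by simpa using hk), if_neg (by simpa using hk)]
            exact Set.union_eq_self_of_subset_right (Set.singleton_subset_iff.mpr (hs k))
        exact hMC G hG (gameOn G s hs {j₀}ᶜ) (hΓA _ hAcne) (gameOn G s hs {j₀})
          (hΓA _ hj₀ne) (hredA _) (hredA _) hun ⟨hφA _ hAcne, hφA _ hj₀ne⟩
  · intro hNash
    refine ⟨?_, ?_, ?_, ?_⟩
    · -- IIS
      intro G hG G' hG' hred s hsmem
      obtain ⟨hsprof, hsφ⟩ := hsmem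
      rw [hNash G hG] at hsφ
      rw [hNash G' hG']
      obtain ⟨hsfeas, hn⟩ := hsφ
      exact ⟨hsprof, fun i t ht => (hred.2 i s (Function.update s i t)).mpr
        ⟨hn i t (hred.1 i ht), hsprof, update_mem_profiles G' hsprof ht⟩⟩
    · -- MC
      intro G hG G' hG' G'' hG'' hr' hr'' hu s hsmem
      obtain ⟨h1, h2⟩ := hsmem
      rw [hNash G' hG'] at h1
      rw [hNash G'' hG''] at h2
      rw [hNash G hG]
      have hs : s ∈ G.profiles := fun j => hr'.1 j (h1.1 j)
      refine ⟨hs, fun i t ht => ?_⟩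
      rw [← hu i] at ht
      rcases ht with ht | ht
      · exact ((hr'.2 i s (Function.update s i t)).mp (h1.2 i t ht)).1
      · exact ((hr''.2 i s (Function.update s i t)).mp (h2.2 i t ht)).1
    · -- ISDS
      intro G hG G' hG' hstr
      obtain ⟨hred, _, hdom⟩ := hstr
      rw [hNash G hG, hNash G' hG']
      ext s
      simp only [Set.mem_setOf_eq]
      constructor
      · rintro ⟨hs, hn⟩
        have hs' : s ∈ G'.profiles := by
          intro j
          by_contra hj
          obtain ⟨t', ht', hstr'⟩ := hdom j (s j) ⟨hs j, hj⟩
          have h1 := hstr' s hs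
          rw [Function.update_eq_self] at h1
          exact h1.2 (hn j t' (hred.1 j ht'))
        exact ⟨hs', fun i t ht => (hred.2 _ _ _).mpr
          ⟨hn i t (hred.1 i ht), hs', update_mem_profiles G' hs' ht⟩⟩
      · rintro ⟨hs', hn⟩
        have hs : s ∈ G.profiles := fun j => hred.1 j (hs' j)
        refine ⟨hs, fun i t ht => ?_⟩
        by_cases h : t ∈ G'.S i
        · exact ((hred.2 _ _ _).mp (hn i t h)).1
        · obtain ⟨t', ht', hstr'⟩ := hdom i t ⟨ht, h⟩
          have h1 := hstr' s hs
          have h2 : G.pref i s (Function.update s i t') :=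
            ((hred.2 _ _ _).mp (hn i t' ht')).1
          exact G.trans i s (Function.update s i t') (Function.update s i t) hs
            (update_mem_profiles G hs (hred.1 i ht')) (update_mem_profiles G hs ht)
            h2 h1.1
    · -- JO
      intro G hG s hJO
      rw [hNash G hG]
      obtain ⟨hs, hopt⟩ := hJO
      refine ⟨hs, fun i t ht => ?_⟩
      have := hopt i s hs t ht
      rwa [Function.update_eq_self] at this
end

section
/- Let Γ be a strictly closed class of one-player games and φ a solution concept on Γ satisfying ISDS. Then for every G in Γ, every element of φ(G) is a preference-maximal strategy (i.e., a Nash equilibrium) of G. -/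
universe u v

variable {ι : Type u} {σ : ι → Type v}

variable {α : Type u}

/-- A one-player game: a nonempty strategy set with a complete and transitive
preference relation on it. -/
structure OneGame (α : Type u) where
  S : Set α
  nonempty : S.Nonempty
  pref : α → α → Prop
  complete : ∀ s ∈ S, ∀ t ∈ S, pref s t ∨ pref t s
  trans : ∀ s ∈ S, ∀ t ∈ S, ∀ u ∈ S, pref s t → pref t u → pref s u

/-- `G'` is a strict reduction of the one-player game `G`: at least one
strategy is removed, each removed strategy being strictly dominated by some
remaining one; preferences are restricted. -/
def OneGame.IsStrictReduction (G' G : OneGame α) : Prop :=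
  G'.S ⊆ G.S ∧ (G.S \ G'.S).Nonempty ∧
  (∀ s t, G'.pref s t ↔ (G.pref s t ∧ s ∈ G'.S ∧ t ∈ G'.S)) ∧
  ∀ s ∈ G.S \ G'.S, ∃ s' ∈ G'.S, G.pref s' s ∧ ¬ G.pref s s'

/-- The preference-maximal strategies (Nash equilibria) of a one-player game. -/
def OneGame.maxSet (G : OneGame α) : Set α := {s ∈ G.S | ∀ t ∈ G.S, G.pref s t}

/-- A strictly closed class of one-player games. -/
def StrictlyClosed1 (Γ : Set (OneGame α)) : Prop :=
  ∀ G ∈ Γ, ∀ G', G'.IsStrictReduction G → G' ∈ Γ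

/-- ISDS for one-player games. -/
def SatISDS1 (Γ : Set (OneGame α)) (φ : OneGame α → Set α) : Prop :=
  ∀ G ∈ Γ, ∀ G' ∈ Γ, G'.IsStrictReduction G → φ G = φ G'

/-- JO for one-player games. -/
def SatJO1 (Γ : Set (OneGame α)) (φ : OneGame α → Set α) : Prop :=
  ∀ G ∈ Γ, ∀ s ∈ G.maxSet, s ∈ φ G

/-- on a strictly closed class of one-player games, ISDS forces a
solution concept to select only preference-maximal strategies. -/
theorem oneplayer_ISDS_subset_max (Γ : Set (OneGame α)) (φ : OneGame α → Set α)
    (hsol : ∀ G ∈ Γ, φ G ⊆ G.S) (hclosed : StrictlyClosed1 Γ)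
    (hISDS : SatISDS1 Γ φ) :
    ∀ G ∈ Γ, φ G ⊆ G.maxSet := by
  intro G hG s hs
  have hsS := hsol G hG hs
  refine ⟨hsS, ?_⟩
  by_contra h
  push_neg at h
  obtain ⟨t, htS, hnst⟩ := h
  have hts : G.pref t s := (G.complete s hsS t htS).resolve_left hnst
  have hne : t ≠ s := by rintro rfl; exact hnst hts
  set S' : Set α := G.S \ {s} with hS'
  have htS' : t ∈ S' := ⟨htS, hne⟩
  let G' : OneGame α := {
    S := S'
    nonempty := ⟨t, htS'⟩
    pref := fun a b => G.pref a b ∧ a ∈ S' ∧ b ∈ S'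
    complete := by
      intro a ha b hb
      rcases G.complete a ha.1 b hb.1 with h | h
      · exact Or.inl ⟨h, ha, hb⟩
      · exact Or.inr ⟨h, hb, ha⟩
    trans := by
      intro a ha b hb c hc h1 h2
      exact ⟨G.trans a ha.1 b hb.1 c hc.1 h1.1 h2.1, ha, hc⟩ }
  have hred : G'.IsStrictReduction G := by
    refine ⟨fun x hx => hx.1, ⟨s, hsS, fun hx => hx.2 rfl⟩, fun a b => Iff.rfl, ?_⟩
    intro a ha
    have haS : a = s := by
      by_contra h'
      exact ha.2 ⟨ha.1, h'⟩
    subst haS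
    exact ⟨t, htS', hts, hnst⟩
  have hG' := hclosed G hG G' hred
  have heq := hISDS G hG G' hG' hred
  have hsG' : s ∈ φ G' := heq ▸ hs
  exact (hsol G' hG' hsG').2 rfl
end

section
/- Let Γ be a strictly closed class of one-player games. A solution concept φ on Γ satisfies ISDS and JO if and only if φ(G) equals the set of preference-maximal strategies of G for every G in Γ. -/
universe u v

variable {ι : Type u} {σ : ι → Type v}

variable {α : Type u}

/-- on a strictly closed class of one-player games, a solution
concept satisfies ISDS and JO iff it selects exactly the preference-maximal
strategies of every game. -/
theorem oneplayer_characterization (Γ : Set (OneGame α)) (φ : OneGame α → Set α)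
    (hsol : ∀ G ∈ Γ, φ G ⊆ G.S) (hclosed : StrictlyClosed1 Γ) :
    (SatISDS1 Γ φ ∧ SatJO1 Γ φ) ↔ ∀ G ∈ Γ, φ G = G.maxSet := by
  constructor
  · rintro ⟨hisds, hjo⟩ G hG
    apply Set.Subset.antisymm
    · intro s hs
      by_contra hmax
      have hsS : s ∈ G.S := hsol G hG hs
      -- s not maximal: get t with ¬ pref s t
      have : ∃ t ∈ G.S, ¬ G.pref s t := by
        by_contra h
        push_neg at h
        exact hmax ⟨hsS, h⟩
      obtain ⟨t, htS, hnst⟩ := this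
      have hts : G.pref t s := (G.complete s hsS t htS).resolve_left hnst
      have hne : t ≠ s := by rintro rfl; exact hnst hts
      -- build reduction removing s
      set G' : OneGame α :=
        { S := G.S \ {s}
          nonempty := ⟨t, htS, hne⟩
          pref := fun a b => G.pref a b ∧ a ∈ G.S \ {s} ∧ b ∈ G.S \ {s}
          complete := by
            intro a ha b hb
            rcases G.complete a ha.1 b hb.1 with h | h
            · exact Or.inl ⟨h, ha, hb⟩
            · exact Or.inr ⟨h, hb, ha⟩
          trans := by
            intro a ha b hb c hc h1 h2
            exact ⟨G.trans a ha.1 b hb.1 c hc.1 h1.1 h2.1, ha, hc⟩ }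
      have hred : G'.IsStrictReduction G := by
        refine ⟨fun a ha => ha.1, ⟨s, hsS, by simp [G']⟩, fun a b => Iff.rfl, ?_⟩
        intro a ha
        have : a = s := by
          by_contra h
          exact ha.2 ⟨ha.1, h⟩
        subst this
        exact ⟨t, ⟨htS, hne⟩, hts, hnst⟩
      have hG' : G' ∈ Γ := hclosed G hG G' hred
      have : φ G = φ G' := hisds G hG G' hG' hred
      have hs' : s ∈ G'.S := hsol G' hG' (this ▸ hs)
      exact hs'.2 rfl
    · exact fun s hs => hjo G hG s hs
  · intro h
    constructor
    · intro G hG G' hG' hred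
      rw [h G hG, h G' hG']
      obtain ⟨hsub, hrem, hpref, hdom⟩ := hred
      ext s
      constructor
      · rintro ⟨hsS, hmax⟩
        have hs' : s ∈ G'.S := by
          by_contra hns
          obtain ⟨s', hs'S, hp, hnp⟩ := hdom s ⟨hsS, hns⟩
          exact hnp (hmax s' (hsub hs'S))
        refine ⟨hs', fun t ht => ?_⟩
        exact (hpref s t).2 ⟨hmax t (hsub ht), hs', ht⟩
      · rintro ⟨hsS, hmax⟩
        refine ⟨hsub hsS, fun t ht => ?_⟩
        by_cases htS : t ∈ G'.S
        · exact ((hpref s t).1 (hmax t htS)).1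
        · obtain ⟨t', ht'S, hp, _⟩ := hdom t ⟨ht, htS⟩
          have hst' : G.pref s t' := ((hpref s t').1 (hmax t' ht'S)).1
          exact G.trans s (hsub hsS) t' (hsub ht'S) t ht hst' hp
    · intro G hG s hs
      rw [h G hG]; exact hs
end

section
/- In a two-player game G with strategy sets {U, D} × {L, R} and payoffs u(U,L) = (2,2), u(U,R) = (0,0), u(D,L) = (1,1), u(D,R) = (1,1), the strong Nash equilibrium correspondence violates Merging Consistency: the profile (D,R) is a strong Nash equilibrium of both the reduction with profiles {U,D} × {R} and the reduction with profiles {D} × {L,R}, the player-by-player union of whose strategy sets equals that of G, yet (D,R) is not a strong Nash equilibrium of G. -/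
universe u v

variable {ι : Type u} {σ : ι → Type v}

/-- Strong Nash equilibrium: no nonempty coalition has a feasible joint
deviation making each of its members strictly better off. -/
def Game.IsStrongNash (G : Game ι σ) (s : ∀ i, σ i) : Prop :=
  s ∈ G.profiles ∧ ¬ ∃ (C : Set ι) (t : ∀ i, σ i), C.Nonempty ∧ t ∈ G.profiles ∧
    (∀ i ∉ C, t i = s i) ∧ ∀ i ∈ C, G.StrictPref i t s

/-- Common payoff function of the game: player 1 strategies U = `true`,
D = `false`; player 2 strategies L = `true`, R = `false`.
u(U,L) = 2, u(U,R) = 0, u(D,L) = u(D,R) = 1, identical for both players. -/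
noncomputable def exPay : Fin 2 → (Fin 2 → Bool) → ℝ := fun _ s =>
  if s 0 = true then (if s 1 = true then 2 else 0) else 1

/-- The full 2×2 game `G` of Example 2. -/
noncomputable def exG : Game (Fin 2) (fun _ => Bool) where
  S := fun _ => Set.univ
  nonempty := fun _ => ⟨true, trivial⟩
  pref := fun i s t => exPay i t ≤ exPay i s
  complete := fun i s t _ _ => le_total _ _
  trans := fun i s t u _ _ _ h1 h2 => le_trans h2 h1

/-- Strategy sets of a reduction of `exG`. -/
def exSub (T₁ T₂ : Set Bool) : ∀ _ : Fin 2, Set Bool := fun i =>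
  if i = 0 then T₁ else T₂

/-- The reduction of `exG` with strategy sets `T₁ × T₂` and restricted
preferences. -/
noncomputable def exRed (T₁ T₂ : Set Bool) (h₁ : T₁.Nonempty) (h₂ : T₂.Nonempty) :
    Game (Fin 2) (fun _ => Bool) where
  S := exSub T₁ T₂
  nonempty := by
    intro i
    by_cases h : i = 0 <;> simp [exSub, h, h₁, h₂]
  pref := fun i s t => (exPay i t ≤ exPay i s) ∧
    (∀ j, s j ∈ exSub T₁ T₂ j) ∧ (∀ j, t j ∈ exSub T₁ T₂ j)
  complete := by
    intro i s t hs ht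
    rcases le_total (exPay i t) (exPay i s) with h | h
    · exact Or.inl ⟨h, hs, ht⟩
    · exact Or.inr ⟨h, ht, hs⟩
  trans := by
    intro i s t u hs ht hu h1 h2
    exact ⟨le_trans h2.1 h1.1, hs, hu⟩

/-- the strong Nash equilibrium correspondence violates Merging
Consistency: (D,R) is a strong Nash equilibrium of the reductions with profile
sets {U,D} × {R} and {D} × {L,R}, whose player-by-player union of strategy
sets gives back `exG`, but (D,R) is not a strong Nash equilibrium of `exG`. -/
theorem strongNash_violates_MC :
    ∃ (h₁ : (Set.univ : Set Bool).Nonempty) (h₂ : ({false} : Set Bool).Nonempty),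
      IsReduction (exRed Set.univ {false} h₁ h₂) exG ∧
      IsReduction (exRed {false} Set.univ h₂ h₁) exG ∧
      (∀ i, (exRed Set.univ {false} h₁ h₂).S i ∪ (exRed {false} Set.univ h₂ h₁).S i
        = exG.S i) ∧
      (exRed Set.univ {false} h₁ h₂).IsStrongNash (fun _ => false) ∧
      (exRed {false} Set.univ h₂ h₁).IsStrongNash (fun _ => false) ∧
      ¬ exG.IsStrongNash (fun _ => false) := by
  refine ⟨⟨true, trivial⟩, ⟨false, rfl⟩, ?_, ?_, ?_, ?_, ?_, ?_⟩
  · exact ⟨fun i => Set.subset_univ _, fun i s t => Iff.rfl⟩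
  · exact ⟨fun i => Set.subset_univ _, fun i s t => Iff.rfl⟩
  · intro i
    by_cases h : i = 0 <;> simp [exRed, exSub, exG, h, Set.pair_comm]
  · constructor
    · intro j
      fin_cases j <;> simp [exRed, exSub]
    · rintro ⟨C, t, ⟨i, hiC⟩, ht, _, hstr⟩
      have h1 : t 1 ∈ ({false} : Set Bool) := ht 1
      have h1' : t 1 = false := h1
      have hs : (fun _ => false : Fin 2 → Bool) ∈ (exRed Set.univ {false} ⟨true, trivial⟩ ⟨false, rfl⟩).profiles := by
        intro j; fin_cases j <;> simp [exRed, exSub]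
      obtain ⟨hp, hnp⟩ := hstr i hiC
      apply hnp
      refine ⟨?_, hs, ht⟩
      simp only [exPay, h1']
      split <;> norm_num
  · constructor
    · intro j
      fin_cases j <;> simp [exRed, exSub]
    · rintro ⟨C, t, ⟨i, hiC⟩, ht, _, hstr⟩
      have h0 : t 0 ∈ ({false} : Set Bool) := ht 0
      have h0' : t 0 = false := h0
      have hs : (fun _ => false : Fin 2 → Bool) ∈ (exRed {false} Set.univ ⟨false, rfl⟩ ⟨true, trivial⟩).profiles := by
        intro j; fin_cases j <;> simp [exRed, exSub]
      obtain ⟨hp, hnp⟩ := hstr i hiC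
      apply hnp
      refine ⟨?_, hs, ht⟩
      simp [exPay, h0']
  · rintro ⟨-, hno⟩
    apply hno
    refine ⟨Set.univ, fun _ => true, ⟨0, trivial⟩, fun j => trivial, fun i hi => absurd trivial hi, ?_⟩
    intro i _
    constructor
    · show exPay i (fun _ => false) ≤ exPay i (fun _ => true)
      simp [exPay]
    · show ¬ exPay i (fun _ => true) ≤ exPay i (fun _ => false)
      simp [exPay]
end

section
/- If a solution concept φ on a class of games Γ satisfies Merging Consistency, then it satisfies Converse Independence of Irrelevant Strategies: for any game G in Γ with at least three strategy profiles, if a strategy profile s is a solution to every proper reduction of G in Γ to which s belongs, then s ∈ φ(G). -/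
universe u v

variable {ι : Type u} {σ : ι → Type v}

/-- If there are two proper restrictions containing `s` that merge to `G`,
MC and the CIIS hypothesis give `s ∈ φ G`. -/
lemma merge_helper [DecidableEq ι] (Γ : Set (Game ι σ)) (φ : Game ι σ → Set (∀ i, σ i))
    (hred : ∀ G ∈ Γ, ∀ G', IsReduction G' G → G' ∈ Γ) (hMC : SatMC Γ φ)
    (G : Game ι σ) (hG : G ∈ Γ) (s : ∀ i, σ i)
    (hsol : ∀ G' ∈ Γ, IsReduction G' G → G'.S ≠ G.S → s ∈ G'.profiles → s ∈ φ G')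
    (T1 T2 : ∀ i, Set (σ i)) (hsub1 : ∀ i, T1 i ⊆ G.S i) (hsub2 : ∀ i, T2 i ⊆ G.S i)
    (hne1 : ∀ i, (T1 i).Nonempty) (hne2 : ∀ i, (T2 i).Nonempty)
    (hT1 : T1 ≠ G.S) (hT2 : T2 ≠ G.S)
    (hs1 : ∀ i, s i ∈ T1 i) (hs2 : ∀ i, s i ∈ T2 i)
    (hunion : ∀ i, T1 i ∪ T2 i = G.S i) : s ∈ φ G := by
  set G1 := G.restrict T1 hsub1 hne1 with hG1
  set G2 := G.restrict T2 hsub2 hne2 with hG2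
  have hr1 := restrict_isReduction G T1 hsub1 hne1
  have hr2 := restrict_isReduction G T2 hsub2 hne2
  have hm1 : G1 ∈ Γ := hred G hG G1 hr1
  have hm2 : G2 ∈ Γ := hred G hG G2 hr2
  have hφ1 : s ∈ φ G1 := hsol G1 hm1 hr1 hT1 hs1
  have hφ2 : s ∈ φ G2 := hsol G2 hm2 hr2 hT2 hs2
  exact hMC G hG G1 hm1 G2 hm2 hr1 hr2 hunion ⟨hφ1, hφ2⟩

lemma rem_sub [DecidableEq ι] (G : Game ι σ) (j : ι) (x : σ j) :
    ∀ i, Function.update G.S j (G.S j \ {x}) i ⊆ G.S i := by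
  intro i
  rcases eq_or_ne i j with rfl | h
  · rw [Function.update_self]; exact Set.diff_subset
  · rw [Function.update_of_ne h]

lemma rem_mem [DecidableEq ι] (G : Game ι σ) (s : ∀ i, σ i) (hs : s ∈ G.profiles)
    (j : ι) (x : σ j) (hxs : x ≠ s j) :
    ∀ i, s i ∈ Function.update G.S j (G.S j \ {x}) i := by
  intro i
  rcases eq_or_ne i j with rfl | h
  · rw [Function.update_self]
    exact ⟨hs i, fun h => hxs (Set.mem_singleton_iff.mp h).symm⟩
  · rw [Function.update_of_ne h]; exact hs i

lemma rem_ne [DecidableEq ι] (G : Game ι σ) (j : ι) (x : σ j) (hx : x ∈ G.S j) :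
    Function.update G.S j (G.S j \ {x}) ≠ G.S := by
  intro h
  have h2 := congrFun h j
  rw [Function.update_self] at h2
  have : x ∈ G.S j \ {x} := h2.symm ▸ hx
  exact this.2 rfl

/-- Case B: remove `x` at player `j` and `y` at a different player `k`. -/
lemma caseB [DecidableEq ι] (Γ : Set (Game ι σ)) (φ : Game ι σ → Set (∀ i, σ i))
    (hred : ∀ G ∈ Γ, ∀ G', IsReduction G' G → G' ∈ Γ) (hMC : SatMC Γ φ)
    (G : Game ι σ) (hG : G ∈ Γ) (s : ∀ i, σ i) (hs : s ∈ G.profiles)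
    (hsol : ∀ G' ∈ Γ, IsReduction G' G → G'.S ≠ G.S → s ∈ G'.profiles → s ∈ φ G')
    (j k : ι) (hjk : j ≠ k) (x : σ j) (y : σ k)
    (hx : x ∈ G.S j) (hxs : x ≠ s j) (hy : y ∈ G.S k) (hys : y ≠ s k) :
    s ∈ φ G := by
  refine merge_helper Γ φ hred hMC G hG s hsol
    (Function.update G.S j (G.S j \ {x})) (Function.update G.S k (G.S k \ {y}))
    (rem_sub G j x) (rem_sub G k y)
    (fun i => ⟨s i, rem_mem G s hs j x hxs i⟩) (fun i => ⟨s i, rem_mem G s hs k y hys i⟩)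
    (rem_ne G j x hx) (rem_ne G k y hy)
    (rem_mem G s hs j x hxs) (rem_mem G s hs k y hys) ?_
  intro i
  rcases eq_or_ne i j with rfl | hij
  · rw [Function.update_self, Function.update_of_ne hjk]
    exact Set.union_eq_self_of_subset_left Set.diff_subset
  · rcases eq_or_ne i k with rfl | hik
    · rw [Function.update_of_ne hij, Function.update_self]
      exact Set.union_eq_self_of_subset_right Set.diff_subset
    · rw [Function.update_of_ne hij, Function.update_of_ne hik]
      exact Set.union_self _

/-- Case A: remove two distinct strategies `x ≠ y` of the same player `j`. -/
lemma caseA [DecidableEq ι] (Γ : Set (Game ι σ)) (φ : Game ι σ → Set (∀ i, σ i))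
    (hred : ∀ G ∈ Γ, ∀ G', IsReduction G' G → G' ∈ Γ) (hMC : SatMC Γ φ)
    (G : Game ι σ) (hG : G ∈ Γ) (s : ∀ i, σ i) (hs : s ∈ G.profiles)
    (hsol : ∀ G' ∈ Γ, IsReduction G' G → G'.S ≠ G.S → s ∈ G'.profiles → s ∈ φ G')
    (j : ι) (x y : σ j) (hxy : x ≠ y)
    (hx : x ∈ G.S j) (hxs : x ≠ s j) (hy : y ∈ G.S j) (hys : y ≠ s j) :
    s ∈ φ G := by
  refine merge_helper Γ φ hred hMC G hG s hsol
    (Function.update G.S j (G.S j \ {x})) (Function.update G.S j (G.S j \ {y}))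
    (rem_sub G j x) (rem_sub G j y)
    (fun i => ⟨s i, rem_mem G s hs j x hxs i⟩) (fun i => ⟨s i, rem_mem G s hs j y hys i⟩)
    (rem_ne G j x hx) (rem_ne G j y hy)
    (rem_mem G s hs j x hxs) (rem_mem G s hs j y hys) ?_
  intro i
  rcases eq_or_ne i j with rfl | hij
  · rw [Function.update_self, Function.update_self]
    ext z
    constructor
    · rintro (hz | hz) <;> exact hz.1
    · intro hz
      by_cases hzx : z = x
      · subst hzx
        exact Or.inr ⟨hz, fun h => hxy (Set.mem_singleton_iff.mp h)⟩
      · exact Or.inl ⟨hz, fun h => hzx (Set.mem_singleton_iff.mp h)⟩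
  · rw [Function.update_of_ne hij, Function.update_of_ne hij]
    exact Set.union_self _

/-- Merging Consistency implies Converse Independence of
Irrelevant Strategies (on a class closed under reductions): if a game has at
least three strategy profiles and a profile `s` is a solution to every proper
reduction containing it, then `s` is a solution to the game. -/
theorem MC_implies_CIIS [DecidableEq ι] [Fintype ι]
    (Γ : Set (Game ι σ)) (φ : Game ι σ → Set (∀ i, σ i))
    (hred : ∀ G ∈ Γ, ∀ G', IsReduction G' G → G' ∈ Γ)
    (hMC : SatMC Γ φ) :
    ∀ G ∈ Γ,
      (∃ a b c : ∀ i, σ i, a ∈ G.profiles ∧ b ∈ G.profiles ∧ c ∈ G.profiles ∧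
        a ≠ b ∧ a ≠ c ∧ b ≠ c) →
      ∀ s ∈ G.profiles,
        (∀ G' ∈ Γ, IsReduction G' G → G'.S ≠ G.S → s ∈ G'.profiles → s ∈ φ G') →
        s ∈ φ G := by
  intro G hG h3 s hs hsol
  obtain ⟨a, b, c, ha, hb, hc, hab, hac, hbc⟩ := h3
  obtain ⟨p, q, hp, hq, hps, hqs, hpq⟩ :
      ∃ p q, p ∈ G.profiles ∧ q ∈ G.profiles ∧ p ≠ s ∧ q ≠ s ∧ p ≠ q := by
    by_cases h1 : a = s
    · exact ⟨b, c, hb, hc, fun h => hab (h1.trans h.symm), fun h => hac (h1.trans h.symm), hbc⟩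
    · by_cases h2 : b = s
      · exact ⟨a, c, ha, hc, h1, fun h => hbc (h2.trans h.symm), hac⟩
      · exact ⟨a, b, ha, hb, h1, h2, hab⟩
  obtain ⟨j, hpj⟩ := Function.ne_iff.mp hps
  obtain ⟨k, hqk⟩ := Function.ne_iff.mp hqs
  rcases eq_or_ne j k with rfl | hjk
  · rcases eq_or_ne (p j) (q j) with hpeq | hne
    · obtain ⟨l, hl⟩ := Function.ne_iff.mp hpq
      have hlj : l ≠ j := fun h => hl (by subst h; exact hpeq)
      rcases eq_or_ne (p l) (s l) with hpl | hpl
      · have hql : q l ≠ s l := fun h => hl (hpl.trans h.symm)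
        exact caseB Γ φ hred hMC G hG s hs hsol j l hlj.symm (p j) (q l)
          (hp j) hpj (hq l) hql
      · exact caseB Γ φ hred hMC G hG s hs hsol l j hlj (p l) (q j)
          (hp l) hpl (hq j) hqk
    · exact caseA Γ φ hred hMC G hG s hs hsol j (p j) (q j) hne
        (hp j) hpj (hq j) hqk
  · exact caseB Γ φ hred hMC G hG s hs hsol j k hjk (p j) (q k)
      (hp j) hpj (hq k) hqk
end

section
/- In a normal-form game G, if s is a Nash equilibrium of G and G' is a strict reduction of G, then s is a feasible profile of G' (no s_i is removed by the strict reduction) and s is a Nash equilibrium of G'. -/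
universe u v

variable {ι : Type u} {σ : ι → Type v}

/-- a Nash equilibrium of `G` survives any strict reduction `G'`
of `G` and remains a Nash equilibrium of `G'`. -/
theorem nash_survives_strictReduction [DecidableEq ι] [Fintype ι]
    (G G' : Game ι σ) (s : ∀ i, σ i)
    (hNE : G.IsNash s) (hred : IsStrictReduction G' G) :

    s ∈ G'.profiles ∧ G'.IsNash s := by
  obtain ⟨⟨hsub, hprefiff⟩, _, hdom⟩ := hred
  obtain ⟨hfeas, hbest⟩ := hNE
  have hmem : s ∈ G'.profiles := by
    intro i
    by_contra hnot
    obtain ⟨si', hsi', hstrict⟩ := hdom i (s i) ⟨hfeas i, hnot⟩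
    have h1 := hbest i si' (hsub i hsi')
    have h2 := hstrict s hfeas
    rw [show Function.update s i (s i) = s from Function.update_eq_self i s] at h2
    exact h2.2 h1
  refine ⟨hmem, hmem, fun i t ht => ?_⟩
  rw [hprefiff]
  refine ⟨hbest i t (hsub i ht), hmem, fun j => ?_⟩
  by_cases h : j = i
  · subst h; simpa using ht
  · rw [Function.update_of_ne h]; exact hmem j
end
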